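/- If B : ℓ² × ℓ² → ℝ is the standard inner product bilinear form, X is a Banach space containing ℓ² as a closed subspace via an isometric embedding j, and there exists a continuous bilinear form B̃ : X × X → ℝ with B̃(j x, j y) = B(x, y) for all x, y ∈ ℓ², then ℓ² (i.e., the range of j) is complemented in X; conversely, if the range of j is complemented in X, then such an extension B̃ exists. -/

import Mathlib

open scoped ENNReal

/-- The scalar product on `ℓ²` extends to a continuous bilinear form on a superspace `X`
if and only if the (image of the) copy of `ℓ²` is complemented in `X`. -/
theorem inner_product_extends_iff_complemented
    {X : Type*} [NormedAddCommGroup X] [NormedSpace ℝ X] [CompleteSpace X]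
    (j : lp (fun _ : ℕ => ℝ) 2 →L[ℝ] X) (hj : ∀ x, ‖j x‖ = ‖x‖)
    (hrange : IsClosed (Set.range j)) :
    (∃ B : X →L[ℝ] X →L[ℝ] ℝ, ∀ x y : lp (fun _ : ℕ => ℝ) 2,
        B (j x) (j y) = (inner ℝ x y : ℝ)) ↔
      (∃ P : X →L[ℝ] X, Set.range P = Set.range j ∧ ∀ z ∈ Set.range j, P z = z) := by
  classical
  set E := lp (fun _ : ℕ => ℝ) 2 with hE
  have hj_inj : Function.Injective j := by
    intro a b h
    have : ‖a - b‖ = 0 := by rw [← hj, map_sub, h, sub_self, norm_zero]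
    simpa [sub_eq_zero] using this
  constructor
  · rintro ⟨B, hB⟩
    let C : X →L[ℝ] (E →L[ℝ] ℝ) := (B.flip.comp j).flip
    let R : StrongDual ℝ E →L[ℝ] E :=
      (InnerProductSpace.toDual ℝ E).symm.toContinuousLinearEquiv.toContinuousLinearMap
    let P : X →L[ℝ] X := j.comp (R.comp C)
    have hP : ∀ x : E, P (j x) = j x := by
      intro x
      have hC : C (j x) = InnerProductSpace.toDual ℝ E x := by
        ext y
        simp only [C, ContinuousLinearMap.flip_apply, ContinuousLinearMap.comp_apply,
          InnerProductSpace.toDual_apply_apply]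
        exact hB x y
      show j (R (C (j x))) = j x
      congr 1
      show (InnerProductSpace.toDual ℝ E).symm (C (j x)) = x
      rw [hC]
      exact (InnerProductSpace.toDual ℝ E).symm_apply_apply x
    refine ⟨P, ?_, ?_⟩
    · apply Set.Subset.antisymm
      · rintro _ ⟨z, rfl⟩
        exact ⟨R (C z), rfl⟩
      · rintro _ ⟨x, rfl⟩
        exact ⟨j x, hP x⟩
    · rintro _ ⟨x, rfl⟩
      exact hP x
  · rintro ⟨P, hrangeP, hPid⟩
    have hmem : ∀ z : X, ∃ u : E, j u = P z := by
      intro z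
      have : P z ∈ Set.range j := hrangeP ▸ Set.mem_range_self z
      exact this
    let Qf : X → E := fun z => (hmem z).choose
    have hQ : ∀ z, j (Qf z) = P z := fun z => (hmem z).choose_spec
    let Q0 : X →ₗ[ℝ] E :=
      { toFun := Qf
        map_add' := by
          intro a b
          apply hj_inj
          rw [hQ, map_add, map_add j, hQ, hQ]
        map_smul' := by
          intro c a
          apply hj_inj
          rw [hQ, map_smul, map_smul j, hQ]
          rfl }
    have hQbound : ∀ z, ‖Q0 z‖ ≤ ‖P‖ * ‖z‖ := by
      intro z
      calc ‖Q0 z‖ = ‖j (Qf z)‖ := (hj _).symm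
        _ = ‖P z‖ := by rw [hQ]
        _ ≤ ‖P‖ * ‖z‖ := P.le_opNorm z
    let Q : X →L[ℝ] E := Q0.mkContinuous ‖P‖ hQbound
    have hQj : ∀ x : E, Q (j x) = x := by
      intro x
      apply hj_inj
      show j (Qf (j x)) = j x
      rw [hQ]
      exact hPid _ ⟨x, rfl⟩
    let A : X →L[ℝ] (E →L[ℝ] ℝ) := (innerSL ℝ (E := E)).comp Q
    refine ⟨A.flip.comp Q, ?_⟩
    intro x y
    show (inner ℝ (Q (j y)) (Q (j x)) : ℝ) = inner ℝ x y
    rw [hQj, hQj, real_inner_comm]
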